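/- Let ε > 0, let G = (V, E) be a finite simple graph with adjacency matrix A, let P be a partition of V, let I and J be classes of P, and let X ⊆ I and Y ⊆ J be nonempty sets with |X| > ε·|I|, |Y| > ε·|J|, and |d(X, Y) − d(I, J)| > ε. Let Q be a refinement of P such that both X and Y are unions of classes of Q. Then ‖(A_Q − A_P)_{X,Y}‖² > ε⁴·|I|·|J|, where ‖·‖ is the Frobenius norm. -/

import Mathlib

open Finset

/-- `P` is a partition of the finite type `V`. -/
def IsPartition {V : Type*} [Fintype V] [DecidableEq V] (P : Finset (Finset V)) : Prop :=
  (∀ I ∈ P, I.Nonempty) ∧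
  (∀ I ∈ P, ∀ J ∈ P, I ≠ J → Disjoint I J) ∧
  P.sup id = Finset.univ

/-- `Q` is a refinement of `P`. -/
def IsRefinement {V : Type*} [Fintype V] [DecidableEq V] (Q P : Finset (Finset V)) : Prop :=
  ∀ J ∈ Q, ∃ I ∈ P, J ⊆ I

/-- `X` is a union of classes of `Q`: every class of `Q` is contained in `X` or disjoint
from `X`. -/
def IsUnionOfClasses {V : Type*} [Fintype V] [DecidableEq V] (Q : Finset (Finset V))
    (X : Finset V) : Prop :=
  ∀ K ∈ Q, K ⊆ X ∨ Disjoint K X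

/-- The edge density of the pair `(I, J)` in the graph `G`. -/
noncomputable def density {V : Type*} [Fintype V] [DecidableEq V] (G : SimpleGraph V)
    [DecidableRel G.Adj] (I J : Finset V) : ℝ :=
  (((I ×ˢ J).filter fun p => G.Adj p.1 p.2).card : ℝ) / (I.card * J.card)

/-- `M_{I,J}`: the matrix whose entries on `I × J` all equal the average of `M` over `I × J`
and which is `0` outside `I × J`. -/
noncomputable def proj {V : Type*} [Fintype V] [DecidableEq V] (M : Matrix V V ℝ)
    (I J : Finset V) : Matrix V V ℝ :=
  fun i j => if i ∈ I ∧ j ∈ J then (∑ x ∈ I, ∑ y ∈ J, M x y) / (I.card * J.card) else 0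

/-- `M_P = ∑_{I, J ∈ P} M_{I,J}`. -/
noncomputable def projPartition {V : Type*} [Fintype V] [DecidableEq V] (M : Matrix V V ℝ)
    (P : Finset (Finset V)) : Matrix V V ℝ :=
  ∑ I ∈ P, ∑ J ∈ P, proj M I J

/-- The Frobenius norm `‖M‖ = Tr(Mᵀ M)^{1/2}`. -/
noncomputable def frobNorm {V : Type*} [Fintype V] (M : Matrix V V ℝ) : ℝ :=
  Real.sqrt (Matrix.trace (M.transpose * M))

section Helpers

variable {V : Type*} [Fintype V] [DecidableEq V]

lemma sum_ite_prod (s t X Y : Finset V) (c : ℝ) :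
    ∑ i ∈ s, ∑ j ∈ t, (if i ∈ X ∧ j ∈ Y then c else 0)
      = (s ∩ X).card * ((t ∩ Y).card * c) := by
  have h : ∀ i j, (if i ∈ X ∧ j ∈ Y then c else 0)
      = (if i ∈ X then (1:ℝ) else 0) * ((if j ∈ Y then (1:ℝ) else 0) * c) := by
    intro i j; by_cases h1 : i ∈ X <;> by_cases h2 : j ∈ Y <;> simp [h1, h2]
  simp only [h, ← Finset.mul_sum, ← Finset.sum_mul]
  rw [Finset.sum_boole, Finset.sum_boole]
  simp [Finset.filter_mem_eq_inter, mul_assoc]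

lemma sum_decomp {Q : Finset (Finset V)} (hQ : IsPartition Q) {X : Finset V}
    (hXQ : IsUnionOfClasses Q X) (f : V → ℝ) :
    ∑ x ∈ X, f x = ∑ K ∈ Q, if K ⊆ X then ∑ x ∈ K, f x else 0 := by
  rw [← Finset.sum_filter, ← Finset.sum_biUnion]
  · apply Finset.sum_congr _ (fun _ _ => rfl)
    ext x
    simp only [Finset.mem_biUnion, Finset.mem_filter, id]
    constructor
    · intro hx
      have : x ∈ Q.sup id := hQ.2.2 ▸ Finset.mem_univ x
      obtain ⟨K, hK, hxK⟩ := Finset.mem_sup.mp this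
      refine ⟨K, ⟨hK, ?_⟩, hxK⟩
      rcases hXQ K hK with h | h
      · exact h
      · exact absurd hx (Finset.disjoint_left.mp h hxK)
    · rintro ⟨K, ⟨hK, hKX⟩, hxK⟩; exact hKX hxK
  · intro K hK L hL hKL
    exact hQ.2.1 K (Finset.mem_filter.mp hK).1 L (Finset.mem_filter.mp hL).1 hKL

lemma frob_sq (M : Matrix V V ℝ) (X Y : Finset V) :
    frobNorm (proj M X Y) ^ 2
      = (X.card * Y.card : ℝ) * ((∑ x ∈ X, ∑ y ∈ Y, M x y) / (X.card * Y.card)) ^ 2 := by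
  set c : ℝ := (∑ x ∈ X, ∑ y ∈ Y, M x y) / (X.card * Y.card) with hc
  have htr : Matrix.trace ((proj M X Y).transpose * proj M X Y)
      = (X.card * Y.card : ℝ) * c ^ 2 := by
    have h1 : Matrix.trace ((proj M X Y).transpose * proj M X Y)
        = ∑ i : V, ∑ j : V, proj M X Y j i * proj M X Y j i := by
      simp [Matrix.trace, Matrix.mul_apply, Matrix.diag, Matrix.transpose_apply]
    rw [h1]
    have h2 : ∀ i j : V, proj M X Y j i * proj M X Y j i
        = if i ∈ Y ∧ j ∈ X then c * c else 0 := by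
      intro i j
      by_cases hx : j ∈ X <;> by_cases hy : i ∈ Y <;> simp [proj, hx, hy, hc]
    simp only [h2]
    rw [sum_ite_prod]
    simp only [Finset.univ_inter]
    ring
  unfold frobNorm
  rw [Real.sq_sqrt]
  · exact htr
  · rw [htr]; positivity

lemma projPartition_apply {P : Finset (Finset V)} (hP : IsPartition P) {I J : Finset V}
    (hI : I ∈ P) (hJ : J ∈ P) {x y : V} (hx : x ∈ I) (hy : y ∈ J) (M : Matrix V V ℝ) :
    projPartition M P x y = (∑ a ∈ I, ∑ b ∈ J, M a b) / (I.card * J.card) := by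
  unfold projPartition
  rw [show ((∑ I ∈ P, ∑ J ∈ P, proj M I J) x y) = ∑ I' ∈ P, ∑ J' ∈ P, proj M I' J' x y by
    simp [Matrix.sum_apply]]
  rw [Finset.sum_eq_single I]
  · rw [Finset.sum_eq_single J]
    · simp [proj, hx, hy]
    · intro J' hJ' hne
      have hy' : y ∉ J' := Finset.disjoint_left.mp (hP.2.1 J hJ J' hJ' (Ne.symm hne)) hy
      simp [proj, hy']
    · intro h; exact absurd hJ h
  · intro I' hI' hne
    have hx' : x ∉ I' := Finset.disjoint_left.mp (hP.2.1 I hI I' hI' (Ne.symm hne)) hx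
    apply Finset.sum_eq_zero
    intro J' _
    simp [proj, hx']
  · intro h; exact absurd hI h

lemma sum_pp_class {Q : Finset (Finset V)} (hQ : IsPartition Q) {K L : Finset V}
    (hK : K ∈ Q) (hL : L ∈ Q) (M : Matrix V V ℝ) :
    ∑ x ∈ K, ∑ y ∈ L, projPartition M Q x y = ∑ x ∈ K, ∑ y ∈ L, M x y := by
  have hc : ∀ x ∈ K, ∀ y ∈ L, projPartition M Q x y
      = (∑ a ∈ K, ∑ b ∈ L, M a b) / (K.card * L.card) :=
    fun x hx y hy => projPartition_apply hQ hK hL hx hy M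
  rw [Finset.sum_congr rfl fun x hx => Finset.sum_congr rfl fun y hy => hc x hx y hy]
  rw [Finset.sum_const, Finset.sum_const]
  simp only [nsmul_eq_mul]
  have hK0 : (K.card : ℝ) ≠ 0 := Nat.cast_ne_zero.mpr (hQ.1 K hK).card_ne_zero
  have hL0 : (L.card : ℝ) ≠ 0 := Nat.cast_ne_zero.mpr (hQ.1 L hL).card_ne_zero
  field_simp

lemma sum_projQ {Q : Finset (Finset V)} (hQ : IsPartition Q) {X Y : Finset V}
    (hXQ : IsUnionOfClasses Q X) (hYQ : IsUnionOfClasses Q Y) (M : Matrix V V ℝ) :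
    ∑ x ∈ X, ∑ y ∈ Y, projPartition M Q x y = ∑ x ∈ X, ∑ y ∈ Y, M x y := by
  rw [sum_decomp hQ hXQ (fun x => ∑ y ∈ Y, projPartition M Q x y),
      sum_decomp hQ hXQ (fun x => ∑ y ∈ Y, M x y)]
  apply Finset.sum_congr rfl
  intro K hK
  by_cases hKX : K ⊆ X
  · simp only [if_pos hKX]
    have e1 : ∀ N : Matrix V V ℝ, ∑ x ∈ K, ∑ y ∈ Y, N x y
        = ∑ L ∈ Q, if L ⊆ Y then ∑ x ∈ K, ∑ y ∈ L, N x y else 0 := by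
      intro N
      rw [Finset.sum_congr rfl fun x _ => sum_decomp hQ hYQ (fun y => N x y),
        Finset.sum_comm]
      apply Finset.sum_congr rfl
      intro L _
      by_cases hLY : L ⊆ Y <;> simp [hLY]
    rw [e1, e1]
    apply Finset.sum_congr rfl
    intro L hL
    by_cases hLY : L ⊆ Y
    · rw [if_pos hLY, if_pos hLY, sum_pp_class hQ hK hL M]
    · rw [if_neg hLY, if_neg hLY]
  · simp [hKX]

lemma sum_adj (G : SimpleGraph V) [DecidableRel G.Adj] (X Y : Finset V) :
    ∑ x ∈ X, ∑ y ∈ Y, (G.adjMatrix ℝ) x y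
      = (((X ×ˢ Y).filter fun p => G.Adj p.1 p.2).card : ℝ) := by
  simp_rw [SimpleGraph.adjMatrix_apply]
  rw [← Finset.sum_product']
  rw [Finset.sum_boole]

end Helpers

theorem energy_increment_on_witness {V : Type*} [Fintype V] [DecidableEq V]
    (ε : ℝ) (hε : 0 < ε) (G : SimpleGraph V) [DecidableRel G.Adj]
    (A : Matrix V V ℝ) (hA : A = G.adjMatrix ℝ)
    (P : Finset (Finset V)) (hP : IsPartition P)
    (I J : Finset V) (hI : I ∈ P) (hJ : J ∈ P)
    (X Y : Finset V) (hXI : X ⊆ I) (hYJ : Y ⊆ J)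
    (hXne : X.Nonempty) (hYne : Y.Nonempty)
    (hX : (X.card : ℝ) > ε * I.card) (hY : (Y.card : ℝ) > ε * J.card)
    (hd : |density G X Y - density G I J| > ε)
    (Q : Finset (Finset V)) (hQ : IsPartition Q) (hQP : IsRefinement Q P)
    (hXQ : IsUnionOfClasses Q X) (hYQ : IsUnionOfClasses Q Y) :
    frobNorm (proj (projPartition A Q - projPartition A P) X Y) ^ 2 >
      ε ^ 4 * I.card * J.card := by
  have hX0 : (0:ℝ) < X.card := by exact_mod_cast hXne.card_pos
  have hY0 : (0:ℝ) < Y.card := by exact_mod_cast hYne.card_pos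
  have hI0 : (0:ℝ) < I.card := by
    exact_mod_cast (hP.1 I hI).card_pos
  have hJ0 : (0:ℝ) < J.card := by
    exact_mod_cast (hP.1 J hJ).card_pos
  -- the sum of the difference matrix over X × Y
  have hppP : ∀ x ∈ X, ∀ y ∈ Y, projPartition A P x y
      = (∑ a ∈ I, ∑ b ∈ J, A a b) / (I.card * J.card) :=
    fun x hx y hy => projPartition_apply hP hI hJ (hXI hx) (hYJ hy) A
  have hsumP : ∑ x ∈ X, ∑ y ∈ Y, projPartition A P x y
      = (X.card * Y.card : ℝ) * density G I J := by
    rw [Finset.sum_congr rfl fun x hx => Finset.sum_congr rfl fun y hy => hppP x hx y hy]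
    rw [Finset.sum_const, Finset.sum_const]
    simp only [nsmul_eq_mul]
    rw [hA, sum_adj]
    unfold density
    ring
  have hsumQ : ∑ x ∈ X, ∑ y ∈ Y, projPartition A Q x y
      = (X.card * Y.card : ℝ) * density G X Y := by
    rw [sum_projQ hQ hXQ hYQ, hA, sum_adj]
    unfold density
    field_simp
  have hS : ∑ x ∈ X, ∑ y ∈ Y, (projPartition A Q - projPartition A P) x y
      = (X.card * Y.card : ℝ) * (density G X Y - density G I J) := by
    simp only [Matrix.sub_apply, Finset.sum_sub_distrib]
    rw [hsumP, hsumQ]; ring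
  rw [frob_sq, hS]
  have hXY0 : (0:ℝ) < (X.card : ℝ) * Y.card := mul_pos hX0 hY0
  set δ : ℝ := density G X Y - density G I J with hδ
  have hcancel : (X.card : ℝ) * Y.card * (δ / ((X.card : ℝ) * Y.card)) = δ := by
    field_simp
  rw [mul_div_assoc, hcancel]
  have hδ2 : ε ^ 2 < δ ^ 2 := by
    nlinarith [sq_abs δ, mul_self_lt_mul_self hε.le hd, abs_nonneg δ]
  have h1 : ε * I.card * (ε * J.card) < (X.card : ℝ) * Y.card :=
    mul_lt_mul'' hX hY (by positivity) (by positivity)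
  nlinarith [mul_pos (mul_pos hε hI0) (mul_pos hε hJ0), sq_nonneg δ,
    mul_lt_mul'' h1 hδ2 (by positivity) (by positivity)]
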